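/- arXiv:2006.13126 — 2 statements merged into one kernel-verified Lean document; each statement's English description precedes it below -/
import Mathlib

section
/- Let $Y$ be a Poisson random variable with rate $\lambda \geq 0$. Then $\mathbb{E}[\exp(Y/(4\lambda+1))] \leq e^{e/4} < 2$, and consequently the sub-exponential norm satisfies $\|Y\|_{\psi_1} \leq 4\lambda + 1$. -/
open MeasureTheory ProbabilityTheory Nat

/-- The sub-exponential norm `‖X‖_{ψ₁} = inf {t > 0 : E[exp(|X|/t)] ≤ 2}` of a random
variable `X` on a measure space `(Ω, μ)`. -/
noncomputable def subExpNorm {Ω : Type*} [MeasurableSpace Ω] (μ : Measure Ω) (X : Ω → ℝ) : ℝ :=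
  sInf {t : ℝ | 0 < t ∧ ∫ ω, Real.exp (|X ω| / t) ∂μ ≤ 2}

lemma poisson_key (lam : NNReal) :
    (∫ k : ℕ, Real.exp ((k : ℝ) / (4 * (lam : ℝ) + 1)) ∂(poissonMeasure lam)) =
      Real.exp ((lam : ℝ) * (Real.exp (1 / (4 * (lam : ℝ) + 1)) - 1)) := by
  set t : ℝ := 4 * (lam : ℝ) + 1 with ht
  have ht0 : (0 : ℝ) < t := by positivity
  set c : ℝ := Real.exp (1 / t) with hc
  have hterm : ∀ n : ℕ, Real.exp ((n : ℝ) / t) * poissonPMFReal lam n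
      = Real.exp (-(lam : ℝ)) * (((lam : ℝ) * c) ^ n / n !) := by
    intro n
    have h1 : Real.exp ((n : ℝ) / t) = c ^ n := by
      rw [hc, ← Real.exp_nat_mul]
      ring_nf
    rw [h1]
    unfold poissonPMFReal
    rw [mul_pow]
    ring
  have h1 : HasSum (fun n : ℕ => ((lam : ℝ) * c) ^ n / n !) (Real.exp ((lam : ℝ) * c)) := by
    rw [Real.exp_eq_exp_ℝ]
    exact NormedSpace.expSeries_div_hasSum_exp _
  have hsum : HasSum (fun n : ℕ => Real.exp ((n : ℝ) / t) * poissonPMFReal lam n)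
      (Real.exp ((lam : ℝ) * (c - 1))) := by
    have h2 := h1.mul_left (Real.exp (-(lam : ℝ)))
    rw [← Real.exp_add] at h2
    have : -(lam : ℝ) + (lam : ℝ) * c = (lam : ℝ) * (c - 1) := by ring
    rw [this] at h2
    exact h2.congr_fun fun n => (hterm n)
  have hnonneg : ∀ n : ℕ, 0 ≤ Real.exp ((n : ℝ) / t) * poissonPMFReal lam n :=
    fun n => mul_nonneg (Real.exp_nonneg _) poissonPMFReal_nonneg
  have hpmf : ∀ n : ℕ, (poissonPMF lam) n = ENNReal.ofReal (poissonPMFReal lam n) :=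
    fun n => (poissonPMFReal_ofReal_eq_poissonPMF lam n).symm
  -- integrability
  have hint : Integrable (fun n : ℕ => Real.exp ((n : ℝ) / t)) (poissonMeasure lam) := by
    refine ⟨((Real.measurable_exp.comp (measurable_from_nat.div_const t))).aestronglyMeasurable, ?_⟩
    show (∫⁻ n : ℕ, ‖Real.exp ((n : ℝ) / t)‖₊ ∂(poissonMeasure lam)) < ⊤
    rw [lintegral_countable']
    have heq : ∀ n : ℕ, (‖Real.exp ((n : ℝ) / t)‖₊ : ENNReal) * (poissonMeasure lam) {n}
        = ENNReal.ofReal (Real.exp ((n : ℝ) / t) * poissonPMFReal lam n) := by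
      intro n
      rw [show (poissonMeasure lam) {n} = (poissonPMF lam) n from
        by rw [poissonMeasure_singleton, hpmf n]; rfl, hpmf n,
        ← enorm_eq_nnnorm, ← ofReal_norm, Real.norm_of_nonneg (Real.exp_nonneg _),
        ← ENNReal.ofReal_mul (Real.exp_nonneg _)]
    simp_rw [heq]
    rw [← ENNReal.ofReal_tsum_of_nonneg hnonneg hsum.summable]
    exact ENNReal.ofReal_lt_top
  rw [integral_poissonMeasure' hint]
  rw [← hsum.tsum_eq]
  congr 1 with n
  rw [smul_eq_mul, mul_comm]; rfl

/-- For a Poisson random variable `Y` with rate `λ ≥ 0`,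
`E[exp(Y/(4λ+1))] ≤ e^{e/4} < 2`, and consequently `‖Y‖_{ψ₁} ≤ 4λ + 1`. -/
theorem poisson_subExpNorm_le (lam : NNReal) :
    (∫ k : ℕ, Real.exp ((k : ℝ) / (4 * (lam : ℝ) + 1)) ∂(poissonMeasure lam)) ≤
        Real.exp (Real.exp 1 / 4) ∧
      Real.exp (Real.exp 1 / 4) < 2 ∧
      subExpNorm (poissonMeasure lam) (fun k : ℕ => (k : ℝ)) ≤ 4 * (lam : ℝ) + 1 := by
  set t : ℝ := 4 * (lam : ℝ) + 1 with ht
  have ht0 : (0 : ℝ) < t := by positivity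
  have hlam0 : (0 : ℝ) ≤ (lam : ℝ) := lam.coe_nonneg
  have key := poisson_key lam
  -- exponent bound
  have hexp_bound : (lam : ℝ) * (Real.exp (1 / t) - 1) ≤ Real.exp 1 / 4 := by
    have he1 : (1 : ℝ) ≤ Real.exp 1 := Real.one_le_exp one_pos.le
    rcases eq_or_lt_of_le hlam0 with h0 | hpos
    · rw [← h0]
      simp
      positivity
    · -- exp(1/t) * (1 - 1/t) ≤ 1
      have h1 : 1 - 1 / t ≤ Real.exp (-(1 / t)) := by
        have := Real.add_one_le_exp (-(1 / t))
        linarith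
    -- so exp(1/t) * (t - 1) ≤ t
      have h2 : Real.exp (1 / t) * (t - 1) ≤ t := by
        have h3 := mul_le_mul_of_nonneg_left h1 (Real.exp_nonneg (1 / t))
        rw [← Real.exp_add] at h3
        simp only [add_neg_cancel, Real.exp_zero] at h3
        have h4 : Real.exp (1 / t) * (1 - 1 / t) * t = Real.exp (1 / t) * (t - 1) := by
          field_simp
        nlinarith [Real.exp_nonneg (1 / t)]
      have h5 : t - 1 = 4 * (lam : ℝ) := by rw [ht]; ring
      rw [h5] at h2
      nlinarith
  have hle : (∫ k : ℕ, Real.exp ((k : ℝ) / t) ∂(poissonMeasure lam)) ≤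
      Real.exp (Real.exp 1 / 4) := by
    rw [key]; exact Real.exp_le_exp.mpr hexp_bound
  have hlt2 : Real.exp (Real.exp 1 / 4) < 2 := by
    have h1 := Real.exp_one_lt_d9
    have h2 := Real.log_two_gt_d9
    have : Real.exp 1 / 4 < Real.log 2 := by linarith
    calc Real.exp (Real.exp 1 / 4) < Real.exp (Real.log 2) := Real.exp_lt_exp.mpr this
      _ = 2 := Real.exp_log two_pos
  refine ⟨hle, hlt2, ?_⟩
  apply csInf_le
  · exact ⟨0, fun x hx => hx.1.le⟩
  · refine ⟨ht0, ?_⟩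
    have habs : (fun k : ℕ => Real.exp (|(k : ℝ)| / t)) =
        fun k : ℕ => Real.exp ((k : ℝ) / t) := by
      funext k
      rw [abs_of_nonneg (Nat.cast_nonneg k)]
    simp only [habs]
    calc (∫ k : ℕ, Real.exp ((k : ℝ) / t) ∂(poissonMeasure lam))
        ≤ Real.exp (Real.exp 1 / 4) := hle
      _ ≤ 2 := hlt2.le
end

section
/- Let $x, y, \hat{x}, \hat{y} \in [0,1]$ with $x + y > 0$, and suppose $|\hat{x} - x| \leq \delta$ and $|\hat{y} - y| \leq \delta$. Define $\hat{s} = \hat{x}/(\hat{x}+\hat{y})$ if $\hat{x}+\hat{y} > 0$ and $\hat{s} = 0$ otherwise. Then $|\hat{s} - x/(x+y)| \leq \min(\delta/(x+y),\ \delta/(\hat{x}+\hat{y}),\ 1)$, where $\delta/(\hat{x}+\hat{y})$ is interpreted as $+\infty$ when $\hat{x}+\hat{y}=0$. -/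
/-- Perturbation bound for the ratio `x/(x+y)` under entrywise `δ`-perturbations: with
`x, y, x̂, ŷ ∈ [0,1]`, `x + y > 0`, `|x̂ - x| ≤ δ`, `|ŷ - y| ≤ δ`, and
`ŝ = x̂/(x̂+ŷ)` if `x̂+ŷ > 0` (else `ŝ = 0`), we have
`|ŝ - x/(x+y)| ≤ min(δ/(x+y), δ/(x̂+ŷ), 1)`, where the second bound is only asserted
when `x̂ + ŷ > 0` (it is vacuous, i.e. `+∞`, when `x̂ + ŷ = 0`). -/
theorem ratio_perturbation_bound (x y xh yh δ : ℝ)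
    (hx : 0 ≤ x) (hx1 : x ≤ 1) (hy : 0 ≤ y) (hy1 : y ≤ 1)
    (hxh : 0 ≤ xh) (hxh1 : xh ≤ 1) (hyh : 0 ≤ yh) (hyh1 : yh ≤ 1)
    (hpos : 0 < x + y) (hdx : |xh - x| ≤ δ) (hdy : |yh - y| ≤ δ)
    (s : ℝ) (hs : s = if 0 < xh + yh then xh / (xh + yh) else 0) :
    |s - x / (x + y)| ≤ min (δ / (x + y)) 1 ∧
      (0 < xh + yh → |s - x / (x + y)| ≤ δ / (xh + yh)) := by
  rw [abs_le] at hdx hdy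
  have ht0 : 0 ≤ x / (x + y) := div_nonneg hx hpos.le
  have ht1 : x / (x + y) ≤ 1 := by
    rw [div_le_one hpos]; linarith
  by_cases h : 0 < xh + yh
  · rw [hs, if_pos h]
    have key : xh / (xh + yh) - x / (x + y)
        = (xh * y - x * yh) / ((xh + yh) * (x + y)) := by
      field_simp; ring
    have hD : 0 < (xh + yh) * (x + y) := mul_pos h hpos
    have hb1 : |xh / (xh + yh) - x / (x + y)| ≤ δ / (x + y) := by
      rw [key, abs_div, abs_of_pos hD, div_le_div_iff₀ hD hpos]
      have habs : |xh * y - x * yh| ≤ δ * (xh + yh) := abs_le.2 ⟨by nlinarith, by nlinarith⟩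
      nlinarith [abs_le.1 habs]
    have hb2 : |xh / (xh + yh) - x / (x + y)| ≤ δ / (xh + yh) := by
      rw [key, abs_div, abs_of_pos hD, div_le_div_iff₀ hD h]
      have habs : |xh * y - x * yh| ≤ δ * (x + y) := abs_le.2 ⟨by nlinarith, by nlinarith⟩
      nlinarith [abs_le.1 habs]
    have hb3 : |xh / (xh + yh) - x / (x + y)| ≤ 1 := by
      have h0 : 0 ≤ xh / (xh + yh) := div_nonneg hxh h.le
      have h1 : xh / (xh + yh) ≤ 1 := by rw [div_le_one h]; linarith
      rw [abs_le]; constructor <;> linarith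
    exact ⟨le_min hb1 hb3, fun _ => hb2⟩
  · rw [hs, if_neg h]
    have hxh0 : xh = 0 := by nlinarith
    have hxδ : x ≤ δ := by linarith [hdx.1]
    have hb1 : |0 - x / (x + y)| ≤ δ / (x + y) := by
      rw [zero_sub, abs_neg, abs_of_nonneg ht0]
      gcongr
    have hb3 : |0 - x / (x + y)| ≤ 1 := by
      rw [zero_sub, abs_neg, abs_of_nonneg ht0]; exact ht1
    exact ⟨le_min hb1 hb3, fun hc => absurd hc h⟩
end
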